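/- Let A₃ ∈ ℝ^{(N+1)×(N+1)} be the tridiagonal matrix with diagonal entries all equal to v, superdiagonal entries g₀ = α/3, gᵢ = (i+1)/(2i+3)·α for i = 1,…,N−1, and subdiagonal entries f₁ = α, fᵢ = i/(2i−1)·α for i = 2,…,N, with α ≠ 0. Then all eigenvalues of A₃ are real and pairwise distinct, and each has the form v + s·α for some real s. -/

import Mathlib

open Polynomial Matrix Finset

lemma charpoly_conj_aux {m : Type*} [DecidableEq m] [Fintype m] {R : Type*} [CommRing R]
    (P M Q : Matrix m m R) (h1 : P * Q = 1) :
    (P * M * Q).charpoly = M.charpoly := by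
  have hPQ : (C : R →+* R[X]).mapMatrix P * (C : R →+* R[X]).mapMatrix Q = 1 := by
    rw [← _root_.map_mul, h1, _root_.map_one]
  have hc : charmatrix (P * M * Q)
      = (C : R →+* R[X]).mapMatrix P * charmatrix M * (C : R →+* R[X]).mapMatrix Q := by
    rw [charmatrix, charmatrix, mul_sub, sub_mul, ← _root_.map_mul, ← _root_.map_mul, _root_.map_mul, _root_.map_mul]
    congr 1
    rw [← (Matrix.scalar_commute (X : R[X]) (Commute.all _)
      ((C : R →+* R[X]).mapMatrix P)).eq, mul_assoc, hPQ, mul_one]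
  rw [Matrix.charpoly, Matrix.charpoly, hc, det_mul, det_mul, mul_right_comm, ← det_mul,
    hPQ, det_one, one_mul]

lemma charpoly_diag {k : ℕ} {R : Type*} [CommRing R] (d : Fin k → R) :
    (diagonal d).charpoly = ∏ i, (X - C (d i)) := by
  rw [Matrix.charpoly_of_upperTriangular _ (Matrix.blockTriangular_diagonal d)]
  simp

/-- Auxiliary positive diagonal scaling for symmetrizing a tridiagonal matrix. -/
noncomputable def ddiag (n : ℕ) (T : Matrix (Fin (n + 1)) (Fin (n + 1)) ℝ) : ℕ → ℝ
  | 0 => 1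
  | k + 1 =>
    ddiag n T k *
      Real.sqrt (T ⟨min (k + 1) n, Nat.lt_succ_of_le (Nat.min_le_right _ _)⟩
          ⟨min k n, Nat.lt_succ_of_le (Nat.min_le_right _ _)⟩ /
        T ⟨min k n, Nat.lt_succ_of_le (Nat.min_le_right _ _)⟩
          ⟨min (k + 1) n, Nat.lt_succ_of_le (Nat.min_le_right _ _)⟩)

theorem tridiag_eigen (n : ℕ) (T : Matrix (Fin (n + 1)) (Fin (n + 1)) ℝ)
    (htri : ∀ i j : Fin (n + 1), (i : ℕ) ≠ (j : ℕ) → (i : ℕ) ≠ (j : ℕ) + 1 →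
      (j : ℕ) ≠ (i : ℕ) + 1 → T i j = 0)
    (hpos : ∀ i j : Fin (n + 1), (j : ℕ) = (i : ℕ) + 1 → 0 < T i j * T j i) :
    (T.map (fun x : ℝ => (x : ℂ))).charpoly.roots.Nodup ∧
      ∀ μ ∈ (T.map (fun x : ℝ => (x : ℂ))).charpoly.roots, ∃ s : ℝ, μ = (s : ℂ) := by
  classical
  -- the scaling diagonal
  set d : Fin (n + 1) → ℝ := fun i => ddiag n T i.val with hd_def
  -- positivity of ratios
  have hratio : ∀ i j : Fin (n + 1), (j : ℕ) = (i : ℕ) + 1 → 0 < T j i / T i j := by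
    intro i j hij
    rcases mul_pos_iff.mp (hpos i j hij) with ⟨h1, h2⟩ | ⟨h1, h2⟩
    · exact div_pos h2 h1
    · exact div_pos_of_neg_of_neg h2 h1
  have hTne : ∀ i j : Fin (n + 1), (j : ℕ) = (i : ℕ) + 1 → T i j ≠ 0 ∧ T j i ≠ 0 := by
    intro i j hij
    have := hpos i j hij
    constructor
    · intro h; rw [h, zero_mul] at this; exact lt_irrefl _ this
    · intro h; rw [h, mul_zero] at this; exact lt_irrefl _ this
  have hrec : ∀ i j : Fin (n + 1), (j : ℕ) = (i : ℕ) + 1 →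
      d j = d i * Real.sqrt (T j i / T i j) := by
    intro i j hij
    have hjle : (j : ℕ) ≤ n := Nat.lt_succ_iff.mp j.isLt
    have h1 : min ((i : ℕ) + 1) n = (j : ℕ) := by omega
    have h2 : min (i : ℕ) n = (i : ℕ) := by omega
    have e1 : (⟨min ((i : ℕ) + 1) n, Nat.lt_succ_of_le (Nat.min_le_right _ _)⟩ : Fin (n + 1)) = j :=
      Fin.ext (by simpa using h1)
    have e2 : (⟨min (i : ℕ) n, Nat.lt_succ_of_le (Nat.min_le_right _ _)⟩ : Fin (n + 1)) = i :=
      Fin.ext (by simpa using h2)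
    show ddiag n T (j : ℕ) = ddiag n T (i : ℕ) * _
    rw [hij, ddiag, e1, e2]
  have hdpos : ∀ i : Fin (n + 1), 0 < d i := by
    intro i
    have : ∀ k : ℕ, k ≤ n → 0 < ddiag n T k := by
      intro k
      induction k with
      | zero => intro _; norm_num [ddiag]
      | succ k ih =>
        intro hk
        have hk' : k ≤ n := by omega
        set i' : Fin (n + 1) := ⟨k, by omega⟩
        set j' : Fin (n + 1) := ⟨k + 1, by omega⟩
        have hr := hratio i' j' rfl
        have e1 : (⟨min (k + 1) n, Nat.lt_succ_of_le (Nat.min_le_right _ _)⟩ : Fin (n + 1)) = j' :=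
      Fin.ext (by show min (k + 1) n = k + 1; omega)
        have e2 : (⟨min k n, Nat.lt_succ_of_le (Nat.min_le_right _ _)⟩ : Fin (n + 1)) = i' :=
      Fin.ext (by show min k n = k; omega)
        rw [ddiag, e1, e2]
        exact mul_pos (ih hk') (Real.sqrt_pos.mpr hr)
    exact this i.val (Nat.lt_succ_iff.mp i.isLt)
  have hdne : ∀ i : Fin (n + 1), d i ≠ 0 := fun i => (hdpos i).ne'
  -- the symmetrized matrix
  set D : Matrix (Fin (n + 1)) (Fin (n + 1)) ℝ := diagonal d with hD
  set E : Matrix (Fin (n + 1)) (Fin (n + 1)) ℝ := diagonal (fun i => (d i)⁻¹) with hE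
  have hDE : D * E = 1 := by
    rw [hD, hE, diagonal_mul_diagonal]
    have : (fun i => d i * (d i)⁻¹) = fun _ => (1 : ℝ) := funext fun i => mul_inv_cancel₀ (hdne i)
    rw [this, diagonal_one]
  set S : Matrix (Fin (n + 1)) (Fin (n + 1)) ℝ := E * T * D with hS
  have hSentry : ∀ i j, S i j = (d i)⁻¹ * T i j * d j := by
    intro i j
    rw [hS, hE, hD, Matrix.mul_diagonal, Matrix.diagonal_mul]
  have hTS : T = D * S * E := by
    rw [hS]
    simp only [← Matrix.mul_assoc]
    rw [hDE, one_mul, Matrix.mul_assoc, hDE, mul_one]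
  -- symmetry of S
  have hsymstep : ∀ i j : Fin (n + 1), (j : ℕ) = (i : ℕ) + 1 → S j i = S i j := by
    intro i j hij
    obtain ⟨ha, hb⟩ := hTne i j hij
    have hr := hratio i j hij
    have hs : (0 : ℝ) < Real.sqrt (T j i / T i j) := Real.sqrt_pos.mpr hr
    have h2 : Real.sqrt (T j i / T i j) * Real.sqrt (T j i / T i j) = T j i / T i j :=
      Real.mul_self_sqrt hr.le
    have h3 : Real.sqrt (T j i / T i j) * Real.sqrt (T j i / T i j) * T i j = T j i := by
      rw [h2]; field_simp
    have hdi := hdne i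
    rw [hSentry, hSentry, hrec i j hij]
    field_simp
    linear_combination (-1 : ℝ) * h3
  have hHermEq : Sᴴ = S := by
    ext i j
    rw [conjTranspose_apply, star_trivial]
    by_cases h1 : (i : ℕ) = (j : ℕ)
    · have : i = j := Fin.ext h1
      rw [this]
    · by_cases h2 : (j : ℕ) = (i : ℕ) + 1
      · exact hsymstep i j h2
      · by_cases h3 : (i : ℕ) = (j : ℕ) + 1
        · exact (hsymstep j i h3).symm
        · rw [hSentry, hSentry, htri i j h1 h3 h2, htri j i (fun h => h1 h.symm) h2 h3]
          ring
  have hHerm : S.IsHermitian := hHermEq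
  -- tridiagonal structure of S
  have hSsup : ∀ i j : Fin (n + 1), (j : ℕ) = (i : ℕ) + 1 → S i j ≠ 0 := by
    intro i j hij
    rw [hSentry]
    exact mul_ne_zero (mul_ne_zero (inv_ne_zero (hdne i)) (hTne i j hij).1) (hdne j)
  have hStri : ∀ i j : Fin (n + 1), (i : ℕ) ≠ (j : ℕ) → (i : ℕ) ≠ (j : ℕ) + 1 →
      (j : ℕ) ≠ (i : ℕ) + 1 → S i j = 0 := by
    intro i j h1 h2 h3
    rw [hSentry, htri i j h1 h2 h3]
    ring
  -- kernel triviality for eigen-equations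
  have hker : ∀ (c : ℝ) (w : Fin (n + 1) → ℝ), S *ᵥ w = c • w →
      w ⟨0, Nat.succ_pos n⟩ = 0 → w = 0 := by
    intro c w hw h0
    have key : ∀ k : ℕ, ∀ j : Fin (n + 1), (j : ℕ) ≤ k → w j = 0 := by
      intro k
      induction k with
      | zero =>
        intro j hj
        have : j = ⟨0, Nat.succ_pos n⟩ := Fin.ext (by simp only [Fin.val_mk]; omega)
        rw [this]; exact h0
      | succ k ih =>
        intro j hj
        rcases Nat.lt_or_ge (j : ℕ) (k + 1) with h | h
        · exact ih j (by omega)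
        have hjv : (j : ℕ) = k + 1 := by omega
        have hkn : k + 1 ≤ n := by
          have := j.isLt; omega
        set r : Fin (n + 1) := ⟨k, by omega⟩ with hr
        have hwr : w r = 0 := ih r (le_refl k)
        have hsum : ∑ l, S r l * w l = S r j * w j := by
          apply Finset.sum_eq_single j
          · intro l _ hl
            rcases Nat.lt_or_ge (l : ℕ) (k + 1) with h' | h'
            · rw [ih l (by omega), mul_zero]
            · have hlv : (l : ℕ) ≥ k + 2 := by
                rcases Nat.lt_or_ge (l : ℕ) (k + 2) with h'' | h''
                · exfalso; exact hl (Fin.ext (by omega))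
                · exact h''
              rw [hStri r l (by simp [hr]; omega) (by simp [hr]; omega) (by simp [hr]; omega),
                zero_mul]
          · intro hj'; exact absurd (Finset.mem_univ j) hj'
        have hrow : (S *ᵥ w) r = c * w r := by rw [hw]; rfl
        have hrow' : (S *ᵥ w) r = ∑ l, S r l * w l := rfl
        have : S r j * w j = 0 := by
          rw [← hsum, ← hrow', hrow, hwr, mul_zero]
        exact (mul_eq_zero.mp this).resolve_left (hSsup r j (by simp [hr, hjv]))
    funext j
    exact key n j (Nat.lt_succ_iff.mp j.isLt)
  -- spectral theory
  set lam := hHerm.eigenvalues with hlam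
  have hmul : ∀ i : Fin (n + 1),
      S *ᵥ ⇑(hHerm.eigenvectorBasis i) = lam i • ⇑(hHerm.eigenvectorBasis i) :=
    fun i => hHerm.mulVec_eigenvectorBasis i
  have hinner : ∀ i j : Fin (n + 1),
      (∑ k, hHerm.eigenvectorBasis i k * hHerm.eigenvectorBasis j k) = if i = j then 1 else 0 := by
    intro i j
    have h := orthonormal_iff_ite.mp hHerm.eigenvectorBasis.orthonormal i j
    rw [PiLp.inner_apply] at h
    simp [RCLike.inner_apply, starRingEnd_apply] at h
    rw [← h]
    exact Finset.sum_congr rfl fun k _ => mul_comm _ _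
  have hlaminj : Function.Injective lam := by
    intro i j hij
    by_contra hne
    set x : Fin (n + 1) → ℝ := ⇑(hHerm.eigenvectorBasis i) with hxdef
    set y : Fin (n + 1) → ℝ := ⇑(hHerm.eigenvectorBasis j) with hydef
    have hx : S *ᵥ x = lam i • x := hmul i
    have hy : S *ᵥ y = lam i • y := by rw [hij]; exact hmul j
    have hxx : ∑ k, x k * x k = 1 := by simpa using hinner i i
    have hxy : ∑ k, x k * y k = 0 := by simpa [hne] using hinner i j
    have hyy : ∑ k, y k * y k = 1 := by simpa using hinner j j
    set z0 : Fin (n + 1) := ⟨0, Nat.succ_pos n⟩ with hz0def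
    set a := x z0 with hadef
    set b := y z0 with hbdef
    set z : Fin (n + 1) → ℝ := b • x - a • y with hzdef
    have hz : S *ᵥ z = lam i • z := by
      have h1 : S *ᵥ z = b • (S *ᵥ x) - a • (S *ᵥ y) := by
        rw [hzdef, Matrix.mulVec_sub, Matrix.mulVec_smul, Matrix.mulVec_smul]
      rw [h1, hx, hy]
      funext k
      simp only [hzdef, Pi.sub_apply, Pi.smul_apply, smul_eq_mul]
      ring
    have hz0 : z z0 = 0 := by
      simp only [hzdef, Pi.sub_apply, Pi.smul_apply, smul_eq_mul]
      ring
    have hzz := hker (lam i) z hz hz0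
    have hzk : ∀ k, b * x k = a * y k := by
      intro k
      have h2 := congrFun hzz k
      simp only [hzdef, Pi.sub_apply, Pi.smul_apply, smul_eq_mul, Pi.zero_apply] at h2
      linarith
    have hb0 : b = 0 := by
      have e1 : b * (∑ k, x k * x k) = a * (∑ k, x k * y k) := by
        rw [Finset.mul_sum, Finset.mul_sum]
        exact Finset.sum_congr rfl fun k _ => by linear_combination x k * hzk k
      rw [hxx, hxy, mul_one, mul_zero] at e1
      exact e1
    have ha0 : a = 0 := by
      have e1 : a * (∑ k, y k * y k) = ∑ k, y k * (b * x k) := by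
        rw [Finset.mul_sum]
        exact Finset.sum_congr rfl fun k _ => by linear_combination (-(y k)) * hzk k
      rw [hyy, mul_one] at e1
      rw [e1, hb0]
      simp
    have hx0 := hker (lam i) x hx ha0
    rw [hx0] at hxx
    simp at hxx
  -- the characteristic polynomial
  have hU1 : (hHerm.eigenvectorUnitary : Matrix (Fin (n + 1)) (Fin (n + 1)) ℝ) *
      star (hHerm.eigenvectorUnitary : Matrix (Fin (n + 1)) (Fin (n + 1)) ℝ) = 1 :=
    mem_unitaryGroup_iff.mp hHerm.eigenvectorUnitary.2
  have hcharT : T.charpoly = ∏ k, (X - C (lam k)) := by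
    rw [hTS, charpoly_conj_aux D S E hDE]
    conv_lhs => rw [hHerm.spectral_theorem]
    rw [Unitary.conjStarAlgAut_apply, charpoly_conj_aux _ _ _ hU1, charpoly_diag]
    refine Finset.prod_congr rfl fun k _ => ?_
    simp [RCLike.ofReal_real_eq_id, hlam]
  have hmapeq : T.map (fun x : ℝ => (x : ℂ)) = T.map (algebraMap ℝ ℂ) := rfl
  have hmapcp : (T.map (fun x : ℝ => (x : ℂ))).charpoly
      = ∏ k, (X - C ((lam k : ℝ) : ℂ)) := by
    rw [hmapeq, Matrix.charpoly_map, hcharT, Polynomial.map_prod]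
    refine Finset.prod_congr rfl fun k _ => ?_
    rw [Polynomial.map_sub, Polynomial.map_X, Polynomial.map_C]
    norm_num
  have hroots : (T.map (fun x : ℝ => (x : ℂ))).charpoly.roots
      = Finset.univ.val.map (fun k : Fin (n + 1) => ((lam k : ℝ) : ℂ)) := by
    rw [hmapcp]
    have h1 : ∏ k : Fin (n + 1), (X - C ((lam k : ℝ) : ℂ))
        = ((Finset.univ.val.map fun k : Fin (n + 1) => ((lam k : ℝ) : ℂ)).map
            fun p => X - C p).prod := by
      rw [Multiset.map_map]
      rfl
    rw [h1, Polynomial.roots_multiset_prod_X_sub_C]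
  constructor
  · rw [hroots]
    exact Multiset.Nodup.map
      (fun p q hpq => hlaminj (Complex.ofReal_injective hpq)) Finset.univ.nodup
  · intro μ hμ
    rw [hroots] at hμ
    obtain ⟨k, _, hk⟩ := Multiset.mem_map.mp hμ
    exact ⟨lam k, hk.symm⟩


/-- The tridiagonal matrix `A₃^{(N,N)} ∈ ℝ^{(N+1)×(N+1)}` (0-indexed): diagonal `v`;
superdiagonal `(0,1)`-entry `α/3` and `(r,r+1)`-entry `((r+1)/(2r+3))·α` for `r ≥ 1`;
subdiagonal `(1,0)`-entry `α` and `(r+1,r)`-entry `((r+1)/(2r+1))·α` for `r ≥ 1`. -/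
noncomputable def A3mat (N : ℕ) (v α : ℝ) : Matrix (Fin (N + 1)) (Fin (N + 1)) ℝ :=
  Matrix.of fun i j =>
    if (i : ℕ) = (j : ℕ) then v
    else if (j : ℕ) = (i : ℕ) + 1 then
      (if (i : ℕ) = 0 then α / 3 else (((i : ℕ) : ℝ) + 1) / (2 * ((i : ℕ) : ℝ) + 3) * α)
    else if (i : ℕ) = (j : ℕ) + 1 then
      (if (j : ℕ) = 0 then α else (((j : ℕ) : ℝ) + 1) / (2 * ((j : ℕ) : ℝ) + 1) * α)
    else 0

/-- For `α ≠ 0`, all eigenvalues of `A₃` are real and pairwise distinct, and each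
has the form `v + s·α` for some real `s`. -/
theorem A3_eigenvalues_real_distinct (N : ℕ) (v α : ℝ) (hα : α ≠ 0) :
    ((A3mat N v α).map (fun x : ℝ => (x : ℂ))).charpoly.roots.Nodup ∧
      ∀ μ ∈ ((A3mat N v α).map (fun x : ℝ => (x : ℂ))).charpoly.roots,
        ∃ s : ℝ, μ = ((v + s * α : ℝ) : ℂ) := by
  have htri : ∀ i j : Fin (N + 1), (i : ℕ) ≠ (j : ℕ) → (i : ℕ) ≠ (j : ℕ) + 1 →
      (j : ℕ) ≠ (i : ℕ) + 1 → A3mat N v α i j = 0 := by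
    intro i j h1 h2 h3
    simp only [A3mat, Matrix.of_apply]
    rw [if_neg h1, if_neg h3, if_neg h2]
  have hpos : ∀ i j : Fin (N + 1), (j : ℕ) = (i : ℕ) + 1 →
      0 < A3mat N v α i j * A3mat N v α j i := by
    intro i j hij
    simp only [A3mat, Matrix.of_apply]
    rw [if_neg (show ¬((i : ℕ) = (j : ℕ)) by omega), if_pos hij,
      if_neg (show ¬((j : ℕ) = (i : ℕ)) by omega),
      if_neg (show ¬((i : ℕ) = (j : ℕ) + 1) by omega), if_pos hij]
    by_cases h0 : (i : ℕ) = 0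
    · rw [if_pos h0, if_pos h0]
      have := mul_self_pos.mpr hα
      nlinarith
    · rw [if_neg h0, if_neg h0]
      set t : ℝ := ((i : ℕ) : ℝ) with ht
      have htn : (0 : ℝ) ≤ t := Nat.cast_nonneg _
      have e : (t + 1) / (2 * t + 3) * α * ((t + 1) / (2 * t + 1) * α)
          = (t + 1) / (2 * t + 3) * ((t + 1) / (2 * t + 1)) * (α * α) := by ring
      rw [e]
      exact mul_pos (mul_pos (div_pos (by linarith) (by linarith))
        (div_pos (by linarith) (by linarith))) (mul_self_pos.mpr hα)
  obtain ⟨h1, h2⟩ := tridiag_eigen N (A3mat N v α) htri hpos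
  refine ⟨h1, fun μ hμ => ?_⟩
  obtain ⟨s, hs⟩ := h2 μ hμ
  refine ⟨(s - v) / α, ?_⟩
  have hαC : (α : ℂ) ≠ 0 := Complex.ofReal_ne_zero.mpr hα
  rw [hs]
  push_cast
  rw [div_mul_cancel₀ _ hαC]
  ring
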